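/- arXiv:1501.04800 — 4 statements merged into one kernel-verified Lean document; each statement's English description precedes it below -/
import Mathlib

section
/- For real numbers b > a > 0 and α ∈ [1/2, 1], it holds that (b^(α+1/2) − a^(α+1/2))² ≥ (α+1/2)²·((b^(2α−1) + a^(2α−1))/4)·(b−a)². -/
open intervalIntegral

/-- Squared version of the concavity-based power difference bound. -/
theorem stmt1 (a b α : ℝ) (ha : 0 < a) (hab : a < b)
    (hα1 : 1/2 ≤ α) (hα2 : α ≤ 1) :
    (b ^ (α + 1/2) - a ^ (α + 1/2))^2 ≥
      (α + 1/2)^2 * ((b ^ (2*α - 1) + a ^ (2*α - 1)) / 4) * (b - a)^2 := by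
  have hb : 0 < b := ha.trans hab
  have hba : 0 < b - a := by linarith
  set r : ℝ := α - 1/2 with hrdef
  have hr0 : 0 ≤ r := by simp [hrdef]; linarith
  have hr1 : r ≤ 1 := by simp [hrdef]; linarith
  -- FTC value of the integral
  have hint : ∫ x in a..b, x ^ r = (b ^ (r + 1) - a ^ (r + 1)) / (r + 1) :=
    integral_rpow (Or.inl (by linarith))
  -- integrability
  have hI1 : IntervalIntegrable (fun x : ℝ => x ^ r) MeasureTheory.volume a b :=
    intervalIntegrable_rpow (Or.inl hr0)
  have hI2 : IntervalIntegrable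
      (fun x : ℝ => ((b - x) * a ^ r + (x - a) * b ^ r) / (b - a))
      MeasureTheory.volume a b := by
    apply Continuous.intervalIntegrable
    continuity
  -- pointwise concavity bound
  have hpt : ∀ x ∈ Set.Icc a b,
      ((b - x) * a ^ r + (x - a) * b ^ r) / (b - a) ≤ x ^ r := by
    intro x hx
    have hs : 0 ≤ (b - x) / (b - a) := by
      apply div_nonneg _ hba.le; linarith [hx.2]
    have ht : 0 ≤ (x - a) / (b - a) := by
      apply div_nonneg _ hba.le; linarith [hx.1]
    have hst : (b - x) / (b - a) + (x - a) / (b - a) = 1 := by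
      field_simp; ring
    have hconc := (Real.concaveOn_rpow hr0 hr1).2
      (Set.mem_Ici.2 ha.le) (Set.mem_Ici.2 hb.le) hs ht hst
    simp only [smul_eq_mul] at hconc
    have hx' : (b - x) / (b - a) * a + (x - a) / (b - a) * b = x := by
      field_simp; ring
    rw [hx'] at hconc
    calc ((b - x) * a ^ r + (x - a) * b ^ r) / (b - a)
        = (b - x) / (b - a) * a ^ r + (x - a) / (b - a) * b ^ r := by ring
      _ ≤ x ^ r := hconc
  -- integral of the line
  have hline : ∫ x in a..b, ((b - x) * a ^ r + (x - a) * b ^ r) / (b - a)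
      = (a ^ r + b ^ r) / 2 * (b - a) := by
    have heq : ∀ x : ℝ, ((b - x) * a ^ r + (x - a) * b ^ r) / (b - a)
        = (b * a ^ r - a * b ^ r) / (b - a) + (b ^ r - a ^ r) / (b - a) * x := by
      intro x; field_simp; ring
    simp_rw [heq]
    rw [intervalIntegral.integral_add (intervalIntegrable_const)
      (IntervalIntegrable.const_mul intervalIntegrable_id _),
      intervalIntegral.integral_const_mul, integral_id, integral_const, smul_eq_mul]
    field_simp
    ring
  have hmono : (a ^ r + b ^ r) / 2 * (b - a) ≤ ∫ x in a..b, x ^ r := by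
    rw [← hline]
    exact intervalIntegral.integral_mono_on hab.le hI2 hI1 hpt
  -- linear inequality
  have hp1 : r + 1 = α + 1/2 := by simp [hrdef]; ring
  have hppos : (0:ℝ) < α + 1/2 := by linarith
  have key : b ^ (α + 1/2) - a ^ (α + 1/2)
      ≥ (α + 1/2) * ((b ^ r + a ^ r) / 2) * (b - a) := by
    have := mul_le_mul_of_nonneg_left hmono hppos.le
    rw [hint, hp1] at this
    calc (α + 1/2) * ((b ^ r + a ^ r) / 2) * (b - a)
        = (α + 1/2) * ((a ^ r + b ^ r) / 2 * (b - a)) := by ring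
      _ ≤ (α + 1/2) * ((b ^ (α + 1/2) - a ^ (α + 1/2)) / (α + 1/2)) := this
      _ = b ^ (α + 1/2) - a ^ (α + 1/2) := by field_simp
  -- squaring
  have hRHSnn : 0 ≤ (α + 1/2) * ((b ^ r + a ^ r) / 2) * (b - a) := by
    have := Real.rpow_nonneg ha.le r
    have := Real.rpow_nonneg hb.le r
    positivity
  have hsq : (b ^ (α + 1/2) - a ^ (α + 1/2))^2
      ≥ ((α + 1/2) * ((b ^ r + a ^ r) / 2) * (b - a))^2 :=
    pow_le_pow_left₀ hRHSnn key 2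
  have h2a : a ^ (2*α - 1) = a ^ r * a ^ r := by
    rw [← Real.rpow_add ha]; norm_num [hrdef]; ring_nf
  have h2b : b ^ (2*α - 1) = b ^ r * b ^ r := by
    rw [← Real.rpow_add hb]; norm_num [hrdef]; ring_nf
  have pa : 0 ≤ a ^ r := Real.rpow_nonneg ha.le r
  have pb : 0 ≤ b ^ r := Real.rpow_nonneg hb.le r
  have hprod : 0 ≤ (α + 1/2)^2 * (a ^ r * b ^ r) * (b - a)^2 := by positivity
  rw [ge_iff_le, h2a, h2b]
  nlinarith [hsq, hprod]
end

section
/- Fix α ∈ (1/2, 1], λ ≥ 0, K ∈ ℕ, δ > 0, and set Θ_α = √(2α)/(2α+1), Λ = √(λ/(2α+1)). For a strictly increasing vector x = (x_0,…,x_K) define z_{k−1/2} = δ/(x_k − x_{k−1}) for k = 1,…,K. Define H(x) = δ∑_{k=1}^K Θ_α z_{k−1/2}^{α−1/2}/(α−1/2) + (Λ/2)δ∑_{k=0}^K x_k², F(x) = Θ_α² δ∑_{k=0}^K ((z_{k+1/2}^{α+1/2} − z_{k−1/2}^{α+1/2})/δ)² + (λ/2)δ∑_{k=0}^K x_k² (with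 the convention z_{−1/2} = z_{K+1/2} = 0). Then F(x) = ‖∇_δ H(x)‖_δ² + (2α−1)·Λ·H(x), where ∇_δ H(x) = δ^{−1}∂_x H(x) and ‖v‖_δ² = δ∑_k v_k². -/
open Finset

/-- Discrete fundamental entropy–information relation for `α ∈ (1/2, 1]`. -/
theorem stmt6 (K : ℕ) (hK : 1 ≤ K) (δ α lam : ℝ) (hδ : 0 < δ)
    (hα : 1/2 < α) (hα1 : α ≤ 1) (hlam : 0 ≤ lam)
    (x z : ℕ → ℝ)
    (hx : ∀ k, k < K → x k < x (k+1))
    (hz : ∀ k, 1 ≤ k → k ≤ K → z k = δ / (x k - x (k-1)))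
    (hz0 : z 0 = 0) (hzK : z (K+1) = 0) :
    let Θ : ℝ := Real.sqrt (2*α) / (2*α + 1)
    let Λ : ℝ := Real.sqrt (lam / (2*α + 1))
    let H : ℝ := δ * ∑ k ∈ Finset.Icc 1 K, Θ * (z k) ^ (α - 1/2) / (α - 1/2)
        + Λ/2 * (δ * ∑ k ∈ Finset.range (K+1), (x k)^2)
    let F : ℝ := Θ^2 * δ *
        ∑ k ∈ Finset.range (K+1), (((z (k+1)) ^ (α + 1/2) - (z k) ^ (α + 1/2)) / δ)^2
        + lam/2 * (δ * ∑ k ∈ Finset.range (K+1), (x k)^2)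
    let gradδH : ℕ → ℝ := fun k =>
        δ⁻¹ * (Θ * ((z (k+1)) ^ (α + 1/2) - (z k) ^ (α + 1/2)) + Λ * δ * x k)
    F = δ * ∑ k ∈ Finset.range (K+1), (gradδH k)^2 + (2*α - 1) * Λ * H := by
  intro Θ Λ H F gradδH
  have hδ' : (δ:ℝ) ≠ 0 := ne_of_gt hδ
  have hbpos : (0:ℝ) < α - 1/2 := by linarith
  have hapos : (0:ℝ) < α + 1/2 := by linarith
  have h2a : (0:ℝ) < 2*α + 1 := by linarith
  have hΛ2 : Λ^2 = lam / (2*α + 1) := Real.sq_sqrt (div_nonneg hlam h2a.le)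
  have hlam' : lam = Λ^2 * (2*α + 1) := by
    rw [hΛ2]; field_simp
  -- summation by parts key identity
  have key : ∀ k ∈ Finset.range K,
      x k * z (k+1) ^ (α + 1/2) - x (k+1) * z (k+1) ^ (α + 1/2)
        = -(δ * z (k+1) ^ (α - 1/2)) := by
    intro k hk
    rw [Finset.mem_range] at hk
    have hd : 0 < x (k+1) - x k := sub_pos.2 (hx k hk)
    have hzk : z (k+1) = δ / (x (k+1) - x k) := by
      have h := hz (k+1) (by omega) (by omega)
      simpa using h
    have hzpos : 0 < z (k+1) := hzk ▸ div_pos hδ hd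
    have hab : (α + 1/2 : ℝ) = (α - 1/2) + 1 := by ring
    rw [hab, Real.rpow_add_one hzpos.ne']
    have hdz : (x (k+1) - x k) * z (k+1) = δ := by
      rw [hzk]; field_simp
    linear_combination (-(z (k+1) ^ (α - 1/2 : ℝ))) * hdz
  have h1 : ∑ k ∈ range (K+1), x k * (z (k+1) ^ (α + 1/2) - z k ^ (α + 1/2))
      = -(δ * ∑ k ∈ Icc 1 K, z k ^ (α - 1/2)) := by
    have e0 : ∑ k ∈ range (K+1), x k * (z (k+1) ^ (α + 1/2) - z k ^ (α + 1/2))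
        = ∑ k ∈ range (K+1), x k * z (k+1) ^ (α + 1/2)
          - ∑ k ∈ range (K+1), x k * z k ^ (α + 1/2) := by
      rw [← Finset.sum_sub_distrib]
      exact Finset.sum_congr rfl fun k _ => by ring
    have e1 : ∑ k ∈ range (K+1), x k * z (k+1) ^ (α + 1/2)
        = ∑ k ∈ range K, x k * z (k+1) ^ (α + 1/2) := by
      rw [Finset.sum_range_succ, hzK, Real.zero_rpow hapos.ne', mul_zero, add_zero]
    have e2 : ∑ k ∈ range (K+1), x k * z k ^ (α + 1/2)
        = ∑ k ∈ range K, x (k+1) * z (k+1) ^ (α + 1/2) := by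
      rw [Finset.sum_range_succ', hz0, Real.zero_rpow hapos.ne', mul_zero, add_zero]
    have e3 : ∑ k ∈ Icc 1 K, z k ^ (α - 1/2) = ∑ k ∈ range K, z (k+1) ^ (α - 1/2) := by
      rw [← Finset.Ico_add_one_right_eq_Icc, Finset.sum_Ico_eq_sum_range]
      simp [add_comm]
    rw [e0, e1, e2, ← Finset.sum_sub_distrib, Finset.sum_congr rfl key, e3]
    rw [Finset.sum_neg_distrib, ← Finset.mul_sum]
  have expand : δ * ∑ k ∈ range (K+1), (gradδH k)^2
      = Θ^2 * δ * (∑ k ∈ range (K+1),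
          ((z (k+1) ^ (α + 1/2) - z k ^ (α + 1/2)) / δ)^2)
        + 2*Θ*Λ * (∑ k ∈ range (K+1), x k * (z (k+1) ^ (α + 1/2) - z k ^ (α + 1/2)))
        + Λ^2 * δ * (∑ k ∈ range (K+1), (x k)^2) := by
    rw [Finset.mul_sum, Finset.mul_sum, Finset.mul_sum, Finset.mul_sum,
      ← Finset.sum_add_distrib, ← Finset.sum_add_distrib]
    refine Finset.sum_congr rfl fun k _ => ?_
    simp only [gradδH]
    field_simp
    ring
  have e4 : ∑ k ∈ Icc 1 K, Θ * z k ^ (α - 1/2) / (α - 1/2)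
      = Θ/(α - 1/2) * ∑ k ∈ Icc 1 K, z k ^ (α - 1/2) := by
    rw [Finset.mul_sum]
    exact Finset.sum_congr rfl fun k _ => by ring
  have hfrac : (2*α - 1) / (α - 1/2) = 2 := by
    rw [div_eq_iff hbpos.ne']; ring
  simp only [F, H]
  rw [expand, h1, e4, hlam']
  linear_combination (-(Λ * δ * Θ * (∑ k ∈ Icc 1 K, z k ^ (α - 1/2)))) * hfrac
end

section
/- Fix λ ≥ 0, K ∈ ℕ, δ > 0 with Kδ = 1, set Λ = √(λ/2). For strictly increasing x ∈ ℝ^(K+1) with z_{k−1/2} = δ/(x_k − x_{k−1}), define H(x) = (1/2)δ∑_{k=1}^K ln(z_{k−1/2}) + (Λ/2)δ∑_k x_k² and F(x) = (1/4)δ∑_{k=0}^K ((z_{k+1/2} − z_{k−1/2})/δ)² + (λ/2)δ∑_k x_k² (with z_{−1/2} = z_{K+1/2} = 0). Then F(x) = ‖∇_δ H(x)‖_δ² + Λ. -/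
open Finset

/-- Discrete fundamental entropy–information relation for `α = 1/2` (DLSS case). -/
theorem stmt7 (K : ℕ) (hK : 1 ≤ K) (δ lam : ℝ) (hδ : 0 < δ) (hlam : 0 ≤ lam)
    (hmass : (K : ℝ) * δ = 1)
    (x z : ℕ → ℝ)
    (hx : ∀ k, k < K → x k < x (k+1))
    (hz : ∀ k, 1 ≤ k → k ≤ K → z k = δ / (x k - x (k-1)))
    (hz0 : z 0 = 0) (hzK : z (K+1) = 0) :
    let Λ : ℝ := Real.sqrt (lam / 2)
    let H : ℝ := 1/2 * (δ * ∑ k ∈ Finset.Icc 1 K, Real.log (z k))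
        + Λ/2 * (δ * ∑ k ∈ Finset.range (K+1), (x k)^2)
    let F : ℝ := 1/4 * (δ * ∑ k ∈ Finset.range (K+1), ((z (k+1) - z k) / δ)^2)
        + lam/2 * (δ * ∑ k ∈ Finset.range (K+1), (x k)^2)
    let gradδH : ℕ → ℝ := fun k =>
        δ⁻¹ * (1/2 * (z (k+1) - z k) + Λ * δ * x k)
    F = δ * ∑ k ∈ Finset.range (K+1), (gradδH k)^2 + Λ := by
  intro Λ H F gradδH
  have hδ0 : δ ≠ 0 := ne_of_gt hδ
  have hΛ2 : Λ ^ 2 = lam / 2 := Real.sq_sqrt (by positivity)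
  -- Abel summation: the cross term equals -1
  have e1 : ∑ k ∈ Finset.range (K+1), x k * z (k+1)
      = ∑ k ∈ Finset.range K, x k * z (k+1) := by
    rw [Finset.sum_range_succ, hzK]; ring
  have e2 : ∑ k ∈ Finset.range (K+1), x k * z k
      = ∑ k ∈ Finset.range K, x (k+1) * z (k+1) := by
    rw [Finset.sum_range_succ', hz0]; ring
  have key : ∑ k ∈ Finset.range (K+1), x k * (z (k+1) - z k) = -1 := by
    have : ∑ k ∈ Finset.range (K+1), x k * (z (k+1) - z k)
        = ∑ k ∈ Finset.range K, (x k * z (k+1) - x (k+1) * z (k+1)) := by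
      simp only [mul_sub, Finset.sum_sub_distrib, e1, e2]
    rw [this]
    have hconst : ∀ k ∈ Finset.range K,
        x k * z (k+1) - x (k+1) * z (k+1) = -δ := by
      intro k hk
      rw [Finset.mem_range] at hk
      have hne : x (k+1) - x k ≠ 0 := sub_ne_zero.2 (ne_of_gt (hx k hk))
      rw [hz (k+1) (by omega) (by omega)]
      simp only [Nat.add_sub_cancel]
      field_simp
      ring
    rw [Finset.sum_congr rfl hconst, Finset.sum_const, Finset.card_range]
    simp only [nsmul_eq_mul, mul_neg, hmass]
  -- expand the square
  have expand : δ * ∑ k ∈ Finset.range (K+1), (gradδH k)^2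
      = ∑ k ∈ Finset.range (K+1), (1/4 * (δ * ((z (k+1) - z k) / δ)^2)
        + Λ * (x k * (z (k+1) - z k)) + lam/2 * (δ * (x k)^2)) := by
    rw [Finset.mul_sum]
    refine Finset.sum_congr rfl fun k _ => ?_
    have h2 : lam / 2 = Λ ^ 2 := hΛ2.symm
    rw [h2]
    show δ * (δ⁻¹ * (1/2 * (z (k+1) - z k) + Λ * δ * x k))^2 = _
    field_simp
    ring
  show F = _
  rw [expand]
  simp only [Finset.sum_add_distrib, ← Finset.mul_sum, ← mul_sub]
  rw [key]
  show 1/4 * (δ * ∑ k ∈ Finset.range (K+1), ((z (k+1) - z k) / δ)^2)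
      + lam/2 * (δ * ∑ k ∈ Finset.range (K+1), (x k)^2) = _
  ring
end

section
/- With S⁰ = 1, Sⁿ = (1+τ_n)S^{n−1}, τ_n ∈ (0,τ], t_n = ∑_{j≤n}τ_j, α ∈ [1/2,1], and ŝ_n = ∑_{k=1}^n τ_k·S^{k−1}·(S^k)^(2α+2), it holds that ŝ_n ≤ (1+τ)^(2α+2)·(e^((2α+3)t_n) − 1)/(2α+3), and consequently e^(−t_n) ≤ (1 + a_τ·(2α+3)·ŝ_n)^(−1/(2α+3)) with a_τ = (1+τ)^(−(2α+2)). -/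
/-- Bound on the rescaled times `ŝₙ` and the resulting algebraic decay bound. -/
theorem stmt13 (τmax α : ℝ) (hτ : 0 < τmax) (hα : 1/2 ≤ α) (hα1 : α ≤ 1)
    (τ S : ℕ → ℝ) (hτn : ∀ n, 1 ≤ n → 0 < τ n ∧ τ n ≤ τmax)
    (hS0 : S 0 = 1) (hS : ∀ n : ℕ, S (n+1) = (1 + τ (n+1)) * S n) (n : ℕ) :
    let t : ℕ → ℝ := fun m => ∑ j ∈ Finset.Icc 1 m, τ j
    let shat : ℝ := ∑ k ∈ Finset.Icc 1 n, τ k * S (k-1) * (S k) ^ (2*α + 2)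
    let aτ : ℝ := (1 + τmax) ^ (-(2*α + 2))
    shat ≤ (1 + τmax) ^ (2*α + 2) * (Real.exp ((2*α + 3) * t n) - 1) / (2*α + 3) ∧
    Real.exp (-(t n)) ≤ (1 + aτ * (2*α + 3) * shat) ^ (-(1/(2*α + 3))) := by
  intro t shat aτ
  have hc : (0:ℝ) < 2*α + 3 := by linarith
  have hb : (0:ℝ) < 1 + τmax := by linarith
  set c : ℝ := 2*α + 3 with hcdef
  set C : ℝ := (1 + τmax) ^ (2*α + 2) with hCdef
  have hCpos : 0 < C := Real.rpow_pos_of_pos hb _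
  -- S positivity
  have hSpos : ∀ m, 0 < S m := by
    intro m
    induction m with
    | zero => simp [hS0]
    | succ k ih =>
        rw [hS]
        have := (hτn (k+1) (by omega)).1
        positivity
  -- S m ≤ exp (t m)
  have hSle : ∀ m, S m ≤ Real.exp (t m) := by
    intro m
    induction m with
    | zero => simp [hS0, t]
    | succ k ih =>
        have hτk := (hτn (k+1) (by omega)).1
        have ht : t (k+1) = t k + τ (k+1) := by
          simp [t, Finset.sum_Icc_succ_top (by omega : 1 ≤ k+1)]
        rw [hS, ht, Real.exp_add]
        have h1 : 1 + τ (k+1) ≤ Real.exp (τ (k+1)) := by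
          have := Real.add_one_le_exp (τ (k+1)); linarith
        calc (1 + τ (k+1)) * S k ≤ Real.exp (τ (k+1)) * Real.exp (t k) := by
              apply mul_le_mul h1 ih (le_of_lt (hSpos k)) (le_of_lt (Real.exp_pos _))
          _ = Real.exp (t k) * Real.exp (τ (k+1)) := by ring
  -- main bound by induction
  have main : ∀ m, (∑ k ∈ Finset.Icc 1 m, τ k * S (k-1) * (S k) ^ (2*α + 2))
      ≤ C * (Real.exp (c * t m) - 1) / c := by
    intro m
    induction m with
    | zero => simp [t]
    | succ k ih =>
        have hτk := (hτn (k+1) (by omega)).1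
        have hτk' := (hτn (k+1) (by omega)).2
        have ht : t (k+1) = t k + τ (k+1) := by
          simp [t, Finset.sum_Icc_succ_top (by omega : 1 ≤ k+1)]
        rw [Finset.sum_Icc_succ_top (by omega : 1 ≤ k+1)]
        -- bound the new term
        have hterm : τ (k+1) * S (k+1-1) * (S (k+1)) ^ (2*α + 2)
            ≤ C * (τ (k+1) * Real.exp (c * t k)) := by
          have hSk := hSpos k
          have e1 : (S (k+1)) ^ (2*α+2) = (1 + τ (k+1)) ^ (2*α+2) * (S k) ^ (2*α+2) := by
            rw [hS, Real.mul_rpow (by linarith) (le_of_lt hSk)]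
          have hcc : c = (2*α+2)+1 := by rw [hcdef]; ring
          have e2 : S k * (S k) ^ (2*α+2) = (S k) ^ c := by
            rw [hcc, Real.rpow_add_one (ne_of_gt hSk)]; ring
          have e3 : (S k) ^ c ≤ Real.exp (c * t k) := by
            calc (S k) ^ c ≤ (Real.exp (t k)) ^ c := by
                  exact Real.rpow_le_rpow (le_of_lt hSk) (hSle k) (le_of_lt hc)
              _ = Real.exp (c * t k) := by
                  rw [← Real.exp_mul, mul_comm]
          have e4 : (1 + τ (k+1)) ^ (2*α+2) ≤ C := by
            apply Real.rpow_le_rpow (by linarith) (by linarith) (by linarith)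
          simp only [Nat.add_sub_cancel]
          calc τ (k+1) * S k * (S (k+1)) ^ (2*α+2)
              = (1 + τ (k+1)) ^ (2*α+2) * (τ (k+1) * (S k * (S k) ^ (2*α+2))) := by
                rw [e1]; ring
            _ = (1 + τ (k+1)) ^ (2*α+2) * (τ (k+1) * (S k) ^ c) := by rw [e2]
            _ ≤ C * (τ (k+1) * Real.exp (c * t k)) := by
                apply mul_le_mul e4 _ _ (le_of_lt hCpos)
                · exact mul_le_mul_of_nonneg_left e3 (le_of_lt hτk)
                · positivity
        have hstep : C * (Real.exp (c * t k) - 1) / c + C * (τ (k+1) * Real.exp (c * t k))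
            ≤ C * (Real.exp (c * t (k+1)) - 1) / c := by
          rw [ht, mul_add, Real.exp_add]
          have h1 : c * τ (k+1) + 1 ≤ Real.exp (c * τ (k+1)) :=
            Real.add_one_le_exp _
          have h2 : 0 < Real.exp (c * t k) := Real.exp_pos _
          rw [div_add' _ _ _ (ne_of_gt hc), div_le_div_iff₀ hc hc]
          have h4 : Real.exp (c * t k) * (c * τ (k+1) + 1)
              ≤ Real.exp (c * t k) * Real.exp (c * τ (k+1)) :=
            mul_le_mul_of_nonneg_left h1 (le_of_lt h2)
          nlinarith [mul_le_mul_of_nonneg_left h4 (le_of_lt (mul_pos hCpos hc))]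
        linarith [ih, hterm]
  have h1 := main n
  refine ⟨by simpa using h1, ?_⟩
  -- second part
  have hshat0 : 0 ≤ shat := by
    apply Finset.sum_nonneg
    intro k hk
    simp only [Finset.mem_Icc] at hk
    have := (hτn k hk.1).1
    have := hSpos (k-1)
    have := hSpos k
    positivity
  have haC : aτ * C = 1 := by
    rw [hCdef, show aτ = (1 + τmax) ^ (-(2*α + 2)) from rfl,
      ← Real.rpow_add hb, show -(2*α+2) + (2*α+2) = (0:ℝ) by ring, Real.rpow_zero]
  have haτpos : 0 < aτ := Real.rpow_pos_of_pos hb _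
  have key : 1 + aτ * c * shat ≤ Real.exp (c * t n) := by
    have h2 : aτ * c * shat ≤ aτ * c * (C * (Real.exp (c * t n) - 1) / c) := by
      apply mul_le_mul_of_nonneg_left h1 (by positivity)
    have h3 : aτ * c * (C * (Real.exp (c * t n) - 1) / c) = Real.exp (c * t n) - 1 := by
      field_simp
      linear_combination (Real.exp (c * t n) - 1) * haC
    linarith [h2.trans_eq h3]
  have hpos : (0:ℝ) < 1 + aτ * c * shat := by positivity
  calc Real.exp (-(t n)) = (Real.exp (c * t n)) ^ (-(1/c)) := by
        rw [← Real.exp_mul]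
        congr 1
        field_simp
    _ ≤ (1 + aτ * c * shat) ^ (-(1/c)) := by
        apply Real.rpow_le_rpow_of_nonpos hpos key
        simp only [neg_nonpos]
        positivity
end
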